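/- Let K be a field, V a K-vector space, T : V → V a K-linear map, and W : ℕ → Submodule K V a sequence of subspaces such that W 0 is finite-dimensional and W (j+1) = W j ⊔ (W j).map T for all j ∈ ℕ. Then every W j is finite-dimensional, W j ≤ W (j+1) for all j, and for every j ≥ 1 one has finrank(W (j+1)) + finrank(W (j−1)) ≤ 2 · finrank(W j); equivalently, the sequence of dimension increments r_j = finrank(W j) − finrank(W (j−1)) is non-increasing. -/
import Mathlib

open Module

/-- Rank-nullity for the restriction of `T` to a finite-dimensional submodule `B`. -/
lemma finrank_map_add_finrank_ker_inf
    {K V : Type*} [Field K] [AddCommGroup V] [Module K V]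
    (T : V →ₗ[K] V) (B : Submodule K V) [FiniteDimensional K B] :
    finrank K (B.map T) + finrank K (LinearMap.ker T ⊓ B : Submodule K V)
      = finrank K B := by
  have h := LinearMap.finrank_range_add_finrank_ker (T ∘ₗ B.subtype)
  have hrange : LinearMap.range (T ∘ₗ B.subtype) = B.map T := by
    rw [LinearMap.range_comp, Submodule.range_subtype]
  have hker : LinearMap.ker (T ∘ₗ B.subtype)
      = Submodule.comap B.subtype (LinearMap.ker T ⊓ B) := by
    rw [LinearMap.ker_comp]
    ext x
    simp [Submodule.mem_comap, x.2]
  have e := (Submodule.comapSubtypeEquivOfLe (inf_le_right :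
      LinearMap.ker T ⊓ B ≤ B)).finrank_eq
  rw [hrange, hker, e] at h
  simpa using h

/-- If `A ≤ B` with `B` finite-dimensional, then
`finrank (T B) + finrank A ≤ finrank (T A) + finrank B`. -/
lemma finrank_map_sub_le
    {K V : Type*} [Field K] [AddCommGroup V] [Module K V]
    (T : V →ₗ[K] V) {A B : Submodule K V} [FiniteDimensional K B] (hAB : A ≤ B) :
    finrank K (B.map T) + finrank K A ≤ finrank K (A.map T) + finrank K B := by
  haveI : FiniteDimensional K A := Submodule.finiteDimensional_of_le hAB
  have hB := finrank_map_add_finrank_ker_inf T B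
  have hA := finrank_map_add_finrank_ker_inf T A
  have hmono : finrank K (LinearMap.ker T ⊓ A : Submodule K V)
      ≤ finrank K (LinearMap.ker T ⊓ B : Submodule K V) := by
    haveI : FiniteDimensional K (LinearMap.ker T ⊓ B : Submodule K V) :=
      Submodule.finiteDimensional_of_le inf_le_right
    exact Submodule.finrank_mono (inf_le_inf_left _ hAB)
  omega

theorem tower_dimension_jumps_nonincreasing
    (K V : Type*) [Field K] [AddCommGroup V] [Module K V]
    (T : V →ₗ[K] V) (W : ℕ → Submodule K V)
    (h0 : FiniteDimensional K (W 0))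
    (hW : ∀ j : ℕ, W (j + 1) = W j ⊔ (W j).map T) :
    (∀ j : ℕ, FiniteDimensional K (W j)) ∧
    (∀ j : ℕ, W j ≤ W (j + 1)) ∧
    (∀ j : ℕ, 1 ≤ j →
      finrank K (W (j + 1)) + finrank K (W (j - 1)) ≤ 2 * finrank K (W j)) := by
  have hfin : ∀ j : ℕ, FiniteDimensional K (W j) := by
    intro j
    induction j with
    | zero => exact h0
    | succ n ih =>
      rw [hW n]
      haveI : FiniteDimensional K ((W n).map T) := Module.Finite.map _ T
      infer_instance
  have hle : ∀ j : ℕ, W j ≤ W (j + 1) := fun j => (hW j) ▸ le_sup_left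
  refine ⟨hfin, hle, ?_⟩
  rintro j hj
  obtain ⟨k, rfl⟩ : ∃ k, j = k + 1 := ⟨j - 1, by omega⟩
  haveI := hfin k
  haveI := hfin (k + 1)
  show finrank K (W (k+1+1)) + finrank K (W k) ≤ 2 * finrank K (W (k+1))
  haveI : FiniteDimensional K ((W (k+1)).map T) := Module.Finite.map _ T
  have hsup := Submodule.finrank_sup_add_finrank_inf_eq (W (k+1)) ((W (k+1)).map T)
  have hkey : finrank K (W (k+1+1)) + finrank K (W (k+1) ⊓ (W (k+1)).map T : Submodule K V)
      = finrank K (W (k+1)) + finrank K ((W (k+1)).map T) := by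
    rw [hW (k+1)] at *
    exact hsup
  -- T(W k) ≤ W(k+1) ⊓ T(W(k+1))
  have h1 : (W k).map T ≤ W (k+1) ⊓ (W (k+1)).map T :=
    le_inf ((hW k) ▸ le_sup_right) (Submodule.map_mono (hle k))
  haveI : FiniteDimensional K (W (k+1) ⊓ (W (k+1)).map T : Submodule K V) :=
    Submodule.finiteDimensional_of_le inf_le_left
  have h2 : finrank K ((W k).map T) ≤ finrank K (W (k+1) ⊓ (W (k+1)).map T : Submodule K V) :=
    Submodule.finrank_mono h1
  have h3 := finrank_map_sub_le T (hle k)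
  omega
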